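/- arXiv:1405.7820 — 2 statements merged into one kernel-verified Lean document; each statement's English description precedes it below -/
import Mathlib

section
/- Let t > r ≥ 1 and a, b > 0. Any x > 0 satisfying x^t ≤ a + b x^r also satisfies x^t ≤ e·a + ((2t−r)/(t−r))^{t/(t−r)} · b^{t/(t−r)}. -/
/-- Let `t > r ≥ 1` and `a, b > 0`. Any `x > 0` satisfying `x^t ≤ a + b x^r`
also satisfies `x^t ≤ e·a + ((2t−r)/(t−r))^(t/(t−r)) · b^(t/(t−r))`. -/
theorem stmt_8 (t r a b x : ℝ) (hr : 1 ≤ r) (htr : r < t) (ha : 0 < a) (hb : 0 < b)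
    (hx : 0 < x) (h : x ^ t ≤ a + b * x ^ r) :
    x ^ t ≤ Real.exp 1 * a + ((2 * t - r) / (t - r)) ^ (t / (t - r)) * b ^ (t / (t - r)) := by
  set e := Real.exp 1 with he
  have he2 : (2:ℝ) < e := by
    have := Real.exp_one_gt_d9; simp only [he]; linarith
  have htr0 : (0:ℝ) < t - r := by linarith
  have hq0 : 0 ≤ t / (t - r) := div_nonneg (by linarith) htr0.le
  have hbase : (0:ℝ) ≤ (2 * t - r) / (t - r) := div_nonneg (by linarith) htr0.le
  have hpos2 : (0:ℝ) ≤ ((2 * t - r) / (t - r)) ^ (t / (t - r)) * b ^ (t / (t - r)) :=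
    mul_nonneg (Real.rpow_nonneg hbase _) (Real.rpow_nonneg hb.le _)
  by_cases hca : x ^ t ≤ e * a
  · linarith
  push_neg at hca
  have hepos : (0:ℝ) < e := by linarith
  have h1 : x ^ t * (e - 1) < e * b * x ^ r := by
    have := mul_le_mul_of_nonneg_left h hepos.le
    nlinarith
  have hsplit : x ^ t = x ^ r * x ^ (t - r) := by
    rw [← Real.rpow_add hx]; ring_nf
  have hxr : 0 < x ^ r := Real.rpow_pos_of_pos hx r
  have h2 : x ^ (t - r) < 2 * b := by
    rw [hsplit] at h1
    have h3 : x ^ (t - r) * (e - 1) < e * b := by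
      have := (mul_lt_mul_iff_right₀ hxr).mp (by nlinarith : x ^ r * (x ^ (t - r) * (e - 1)) < x ^ r * (e * b))
      linarith
    nlinarith
  have h4 : x ^ t = (x ^ (t - r)) ^ (t / (t - r)) := by
    rw [← Real.rpow_mul hx.le]
    congr 1
    field_simp
  have h5 : (x ^ (t - r)) ^ (t / (t - r)) ≤ (2 * b) ^ (t / (t - r)) :=
    Real.rpow_le_rpow (Real.rpow_nonneg hx.le _) h2.le hq0
  have h6 : (2 * b) ^ (t / (t - r)) = (2:ℝ) ^ (t / (t - r)) * b ^ (t / (t - r)) :=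
    Real.mul_rpow (by norm_num) hb.le
  have h7 : (2:ℝ) ≤ (2 * t - r) / (t - r) := by
    rw [le_div_iff₀ htr0]; linarith
  have h8 : (2:ℝ) ^ (t / (t - r)) ≤ ((2 * t - r) / (t - r)) ^ (t / (t - r)) :=
    Real.rpow_le_rpow (by norm_num) h7 hq0
  have hbq : 0 ≤ b ^ (t / (t - r)) := Real.rpow_nonneg hb.le _
  have hea : 0 < e * a := mul_pos hepos ha
  calc x ^ t = (x ^ (t - r)) ^ (t / (t - r)) := h4
    _ ≤ (2:ℝ) ^ (t / (t - r)) * b ^ (t / (t - r)) := by rw [← h6]; exact h5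
    _ ≤ ((2 * t - r) / (t - r)) ^ (t / (t - r)) * b ^ (t / (t - r)) :=
        mul_le_mul_of_nonneg_right h8 hbq
    _ ≤ e * a + _ := by linarith
end

section
/- For every z = u+iv with v > 0, every J ⊆ {1,…,n}, and in fact for every complex number w with Im w ≥ 0, one has |z + w + s(z)| ≥ Im w; in particular |z + m_n^{(J)}(z) + s(z)| ≥ Im m_n^{(J)}(z). Moreover there exists an absolute constant c0 > 0 such that for every z ∈ 𝔾, |z + m_n^{(J)}(z) + s(z)| ≥ c0 √|z²−4|. -/
open MeasureTheory

/-- with `s` the Stieltjes transform of the semicircular law (the root of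
`s² + z s + 1 = 0` with positive imaginary part in the upper half-plane):
for every `z` with `Im z > 0` and every `w` with `Im w ≥ 0` one has `|z + w + s(z)| ≥ Im w`
(in particular for `w = m_n^{(J)}(z)`); moreover there is an absolute constant `c0 > 0` such
that for every `z` in the region `𝔾` (with `v0 = A0/n`, `ε = (2 a v0)^{2/3}`,
`γ(z) = |2 − |Re z||`, `a` determined by `(1/π)∫_{|u|≤a} du/(u²+1) = 3/4`) and every such `w`,
`|z + w + s(z)| ≥ c0 √|z²−4|`. -/
theorem stmt_14 :
    ∃ c0 : ℝ, 0 < c0 ∧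
      ∀ s : ℂ → ℂ,
        (∀ z : ℂ, 0 < z.im → (s z) ^ 2 + z * s z + 1 = 0 ∧ 0 < (s z).im) →
        (∀ z w : ℂ, 0 < z.im → 0 ≤ w.im → w.im ≤ ‖z + w + s z‖) ∧
        (∀ (n : ℕ), 1 ≤ n → ∀ A0 a : ℝ, 0 < A0 → 0 < a →
          (1 / Real.pi) * (∫ u in Set.Icc (-a) a, 1 / (u ^ 2 + 1)) = 3 / 4 →
          ∀ z w : ℂ, 0 ≤ w.im →
            0 < z.im →
            -2 + (2 * a * (A0 / n)) ^ ((2 : ℝ) / 3) ≤ z.re →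
            z.re ≤ 2 - (2 * a * (A0 / n)) ^ ((2 : ℝ) / 3) →
            (A0 / n) / Real.sqrt (abs (2 - abs z.re)) ≤ z.im →
            c0 * Real.sqrt ‖z ^ 2 - 4‖ ≤ ‖z + w + s z‖) := by
  refine ⟨1/4, by norm_num, ?_⟩
  intro s hs
  constructor
  · intro z w hz hw
    obtain ⟨-, hsim⟩ := hs z hz
    have h1 : w.im ≤ (z + w + s z).im := by
      simp only [Complex.add_im]; linarith
    exact h1.trans (Complex.im_le_norm _)
  · intro n hn A0 a hA0 ha hint z w hw hz h1 h2 h3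
    obtain ⟨heq, hsim⟩ := hs z hz
    set t := s z with ht
    have hε : (0:ℝ) ≤ (2 * a * (A0 / n)) ^ ((2:ℝ)/3) :=
      Real.rpow_nonneg (by positivity) _
    have hre : z.re ^ 2 ≤ 4 := by nlinarith
    set W : ℂ := z + 2*t with hW
    have hW2 : W ^ 2 = z ^ 2 - 4 := by
      rw [hW]; linear_combination 4 * heq
    have hWim : W.im = z.im + 2 * t.im := by
      simp [hW, Complex.add_im, Complex.mul_im]
    have hWimpos : 0 < W.im := by rw [hWim]; linarith
    have hre2 : (W ^ 2).re ≤ 0 := by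
      rw [hW2]
      have : ((z:ℂ) ^ 2 - 4).re = z.re ^ 2 - z.im ^ 2 - 4 := by
        simp [pow_two, Complex.mul_re, Complex.sub_re]
      rw [this]; nlinarith
    have hre3 : (W ^ 2).re = W.re ^ 2 - W.im ^ 2 := by
      simp [pow_two, Complex.mul_re]
    have hkey : W.re ^ 2 ≤ W.im ^ 2 := by linarith [hre3 ▸ hre2]
    have habsW : ‖W‖ ≤ 2 * W.im := by
      have hsq : ‖W‖ ^ 2 ≤ (2 * W.im) ^ 2 := by
        rw [Complex.sq_norm, Complex.normSq_apply]; nlinarith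
      nlinarith [hsq, norm_nonneg W, hWimpos]
    have hsqrt : Real.sqrt ‖z ^ 2 - 4‖ = ‖W‖ := by
      rw [← hW2, norm_pow, Real.sqrt_sq (norm_nonneg W)]
    rw [hsqrt]
    have him : W.im / 2 ≤ (z + w + t).im := by
      simp only [Complex.add_im]; rw [hWim] at *; linarith
    calc (1:ℝ)/4 * ‖W‖ ≤ W.im / 2 := by linarith
      _ ≤ (z + w + t).im := him
      _ ≤ ‖z + w + t‖ := Complex.im_le_norm _
end
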